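/- Let G be a connected finite graph and L a list assignment with |L(x)| ≥ deg_G(x) for all x ∈ V(G). Let g be a proper partial L-coloring of G. Then for every vertex u ∈ V(G), there exists a proper partial L-coloring f of G with dom(f) ⊇ V(G) \ {u} and such that f dominates g, i.e. |f⁻¹(α)| ≥ |g⁻¹(α)| for every color α. -/

import Mathlib

open Finset SimpleGraph

lemma stmt9_exists_adj_dist_lt {V : Type*} (G : SimpleGraph V) (hconn : G.Connected)
    {w u : V} (h : w ≠ u) :
    ∃ v, G.Adj w v ∧ G.dist v u < G.dist w u := by
  obtain ⟨p, hp⟩ := hconn.exists_walk_length_eq_dist w u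
  cases p with
  | nil => exact absurd rfl h
  | @cons _ b _ a q =>
    refine ⟨b, a, lt_of_le_of_lt (SimpleGraph.dist_le q) ?_⟩
    rw [SimpleGraph.Walk.length_cons] at hp
    omega

lemma stmt9_key {V C : Type*} [Fintype V] [DecidableEq V] [DecidableEq C]
    (G : SimpleGraph V) [DecidableRel G.Adj] (hconn : G.Connected)
    (L : V → Finset C) (hL : ∀ x, G.degree x ≤ (L x).card) (u : V) :
    ∀ n : ℕ, ∀ g : V → Option C,
      (∀ x c, g x = some c → c ∈ L x) →
      (∀ x y, G.Adj x y → ∀ c : C, g x = some c → g y ≠ some c) →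
      (∑ v ∈ Finset.univ.filter (fun v => g v = none ∧ v ≠ u), G.dist v u) ≤ n →
      ∃ f : V → Option C,
        (∀ x c, f x = some c → c ∈ L x) ∧
        (∀ x y, G.Adj x y → ∀ c : C, f x = some c → f y ≠ some c) ∧
        (∀ x, x ≠ u → (f x).isSome) ∧
        (∀ α : C, (Finset.univ.filter fun x => g x = some α).card ≤
          (Finset.univ.filter fun x => f x = some α).card) := by
  intro n
  induction n with
  | zero =>
    intro g hgL hgproper hsum
    refine ⟨g, hgL, hgproper, ?_, fun α => le_rfl⟩
    intro x hxu
    by_contra hx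
    have hxnone : g x = none := by
      cases hgx : g x with
      | none => rfl
      | some c => rw [hgx] at hx; simp at hx
    have hxmem : x ∈ Finset.univ.filter (fun v => g v = none ∧ v ≠ u) := by
      simp [hxnone, hxu]
    have h1 : G.dist x u ≤ 0 :=
      le_trans (Finset.single_le_sum (f := fun v => G.dist v u) (fun _ _ => Nat.zero_le _) hxmem) hsum
    have h2 := hconn.pos_dist_of_ne hxu
    omega
  | succ n ih =>
    intro g hgL hgproper hsum
    by_cases hall : ∀ x, x ≠ u → (g x).isSome
    · exact ⟨g, hgL, hgproper, hall, fun α => le_rfl⟩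
    push_neg at hall
    obtain ⟨w, hwu, hwnone'⟩ := hall
    have hwnone : g w = none := by
      cases hgw : g w with
      | none => rfl
      | some c => rw [hgw] at hwnone'; simp at hwnone'
    have hwmem : w ∈ Finset.univ.filter (fun v => g v = none ∧ v ≠ u) := by
      simp [hwnone, hwu]
    have hwd : 0 < G.dist w u := hconn.pos_dist_of_ne hwu
    have hsum_split :
        G.dist w u + ∑ v ∈ (Finset.univ.filter (fun v => g v = none ∧ v ≠ u)).erase w, G.dist v u
          = ∑ v ∈ Finset.univ.filter (fun v => g v = none ∧ v ≠ u), G.dist v u :=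
      Finset.add_sum_erase _ (fun v => G.dist v u) hwmem
    by_cases hfree : ∃ c ∈ L w, ∀ y, G.Adj w y → g y ≠ some c
    · -- Case A : greedy color w
      obtain ⟨c, hcL, hcfree⟩ := hfree
      set g' : V → Option C := Function.update g w (some c) with hg'
      have hg'w : g' w = some c := Function.update_self _ _ _
      have hg'ne : ∀ x, x ≠ w → g' x = g x := fun x hx => Function.update_of_ne hx _ _
      have hgL' : ∀ x c', g' x = some c' → c' ∈ L x := by
        intro x c' hx
        by_cases hxw : x = w
        · subst hxw; rw [hg'w] at hx; injection hx with h; rw [← h]; exact hcL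
        · exact hgL x c' (by rw [← hg'ne x hxw]; exact hx)
      have hgproper' : ∀ x y, G.Adj x y → ∀ c', g' x = some c' → g' y ≠ some c' := by
        intro x y hxy c' hx hy
        by_cases hxw : x = w
        · subst hxw
          rw [hg'w] at hx; injection hx with h; subst h
          have hyw : y ≠ x := hxy.ne'
          rw [hg'ne y hyw] at hy
          exact hcfree y hxy hy
        · by_cases hyw : y = w
          · subst hyw
            rw [hg'w] at hy; injection hy with h; subst h
            rw [hg'ne x hxw] at hx
            exact hcfree x hxy.symm hx
          · rw [hg'ne x hxw] at hx; rw [hg'ne y hyw] at hy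
            exact hgproper x y hxy c' hx hy
      have hset : Finset.univ.filter (fun v => g' v = none ∧ v ≠ u)
          = (Finset.univ.filter (fun v => g v = none ∧ v ≠ u)).erase w := by
        ext v
        simp only [Finset.mem_filter, Finset.mem_univ, true_and, Finset.mem_erase]
        constructor
        · rintro ⟨h1, h2⟩
          have hvw : v ≠ w := by
            rintro rfl; rw [hg'w] at h1; exact nomatch h1
          exact ⟨hvw, by rw [← hg'ne v hvw]; exact h1, h2⟩
        · rintro ⟨hvw, h1, h2⟩
          exact ⟨by rw [hg'ne v hvw]; exact h1, h2⟩
      have hsum' : (∑ v ∈ Finset.univ.filter (fun v => g' v = none ∧ v ≠ u), G.dist v u) ≤ n := by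
        rw [hset]; omega
      obtain ⟨f, hf1, hf2, hf3, hf4⟩ := ih g' hgL' hgproper' hsum'
      refine ⟨f, hf1, hf2, hf3, fun α => le_trans ?_ (hf4 α)⟩
      apply Finset.card_le_card
      intro x hx
      simp only [Finset.mem_filter, Finset.mem_univ, true_and] at hx ⊢
      have hxw : x ≠ w := by rintro rfl; rw [hwnone] at hx; exact nomatch hx
      rw [hg'ne x hxw]; exact hx
    · -- Case B : all colors of L w blocked; steal from a neighbor closer to u
      push_neg at hfree
      choose φ hφadj hφcol using hfree
      obtain ⟨v1, hv1adj, hv1lt⟩ := stmt9_exists_adj_dist_lt G hconn hwu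
      have hsurj := Finset.surj_on_of_inj_on_of_card_le
        (s := L w) (t := G.neighborFinset w) (fun c hc => φ c hc)
        (fun c hc => (G.mem_neighborFinset w _).mpr (hφadj c hc))
        (fun c1 c2 hc1 hc2 heq => by
          have h1 := hφcol c1 hc1
          have h2 := hφcol c2 hc2
          have heq' : φ c1 hc1 = φ c2 hc2 := heq
          rw [heq'] at h1; rw [h2] at h1; injection h1 with h; exact h.symm)
        (by rw [G.card_neighborFinset_eq_degree]; exact hL w)
      obtain ⟨α, hαL, hv1eq⟩ := hsurj v1 ((G.mem_neighborFinset w v1).mpr hv1adj)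
      have hv1col : g v1 = some α := by rw [hv1eq]; exact hφcol α hαL
      have huniq : ∀ z, G.Adj w z → g z = some α → z = v1 := by
        intro z hz hzcol
        obtain ⟨c', hc', hzeq⟩ := hsurj z ((G.mem_neighborFinset w z).mpr hz)
        have : g z = some c' := by rw [hzeq]; exact hφcol c' hc'
        rw [hzcol] at this; injection this with h; subst h
        rw [hzeq, hv1eq]
      have hwv1 : w ≠ v1 := hv1adj.ne
      set g' : V → Option C := Function.update (Function.update g v1 none) w (some α) with hg'
      have hg'w : g' w = some α := Function.update_self _ _ _
      have hg'v1 : g' v1 = none := by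
        rw [hg', Function.update_of_ne (Ne.symm hwv1), Function.update_self]
      have hg'ne : ∀ x, x ≠ w → x ≠ v1 → g' x = g x := by
        intro x h1 h2
        rw [hg', Function.update_of_ne h1, Function.update_of_ne h2]
      have hgL' : ∀ x c', g' x = some c' → c' ∈ L x := by
        intro x c' hx
        by_cases h1 : x = w
        · subst h1; rw [hg'w] at hx; injection hx with h; rw [← h]; exact hαL
        · by_cases h2 : x = v1
          · subst h2; rw [hg'v1] at hx; exact nomatch hx
          · exact hgL x c' (by rw [← hg'ne x h1 h2]; exact hx)
      have hgproper' : ∀ x y, G.Adj x y → ∀ c', g' x = some c' → g' y ≠ some c' := by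
        intro x y hxy c' hx hy
        by_cases hxw : x = w
        · subst hxw
          rw [hg'w] at hx; injection hx with h; subst h
          have hyw : y ≠ x := hxy.ne'
          by_cases hyv1 : y = v1
          · subst hyv1; rw [hg'v1] at hy; exact nomatch hy
          · rw [hg'ne y hyw hyv1] at hy
            exact hyv1 (huniq y hxy hy)
        · by_cases hxv1 : x = v1
          · subst hxv1; rw [hg'v1] at hx; exact nomatch hx
          · rw [hg'ne x hxw hxv1] at hx
            by_cases hyw : y = w
            · subst hyw
              rw [hg'w] at hy; injection hy with h; subst h
              exact hxv1 (huniq x hxy.symm hx)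
            · by_cases hyv1 : y = v1
              · subst hyv1; rw [hg'v1] at hy; exact nomatch hy
              · rw [hg'ne y hyw hyv1] at hy
                exact hgproper x y hxy c' hx hy
      -- measure decreases
      have hv1notmem : v1 ∉ (Finset.univ.filter (fun v => g v = none ∧ v ≠ u)).erase w := by
        simp [hv1col]
      have hset : Finset.univ.filter (fun v => g' v = none ∧ v ≠ u)
          = if v1 = u then (Finset.univ.filter (fun v => g v = none ∧ v ≠ u)).erase w
            else insert v1 ((Finset.univ.filter (fun v => g v = none ∧ v ≠ u)).erase w) := by
        ext v
        by_cases hvw : v = w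
        · subst hvw
          simp only [Finset.mem_filter, Finset.mem_univ, true_and, hg'w]
          split
          · simp
          · simp [Finset.mem_insert, hwv1, hwnone, hwu]
        · by_cases hvv1 : v = v1
          · subst hvv1
            simp only [Finset.mem_filter, Finset.mem_univ, true_and, hg'v1]
            split
            · rename_i h; simp [h, hv1col]
            · rename_i h; simp [h]
          · simp only [Finset.mem_filter, Finset.mem_univ, true_and, hg'ne v hvw hvv1]
            split
            · simp [Finset.mem_erase, hvw]
            · simp [Finset.mem_insert, hvv1, Finset.mem_erase, hvw]
      have hsum' : (∑ v ∈ Finset.univ.filter (fun v => g' v = none ∧ v ≠ u), G.dist v u) ≤ n := by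
        rw [hset]
        split
        · omega
        · rw [Finset.sum_insert hv1notmem]
          omega
      obtain ⟨f, hf1, hf2, hf3, hf4⟩ := ih g' hgL' hgproper' hsum'
      refine ⟨f, hf1, hf2, hf3, fun β => le_trans ?_ (hf4 β)⟩
      -- domination of g by g'
      by_cases hβ : β = α
      · subst hβ
        have hveq : Finset.univ.filter (fun x => g' x = some β)
            = insert w ((Finset.univ.filter (fun x => g x = some β)).erase v1) := by
          ext x
          by_cases h1 : x = w
          · subst h1; simp [hg'w, hwv1]
          · by_cases h2 : x = v1
            · subst h2; simp [hg'v1, Ne.symm hwv1]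
            · simp [hg'ne x h1 h2, h1, h2]
        have hv1mem : v1 ∈ Finset.univ.filter (fun x => g x = some β) := by simp [hv1col]
        have hwnot : w ∉ (Finset.univ.filter (fun x => g x = some β)).erase v1 := by
          simp [hwnone]
        rw [hveq, Finset.card_insert_of_notMem hwnot, Finset.card_erase_of_mem hv1mem]
        have := Finset.card_pos.mpr ⟨v1, hv1mem⟩
        omega
      · apply Finset.card_le_card
        intro x hx
        simp only [Finset.mem_filter, Finset.mem_univ, true_and] at hx ⊢
        have h1 : x ≠ w := by rintro rfl; rw [hwnone] at hx; exact nomatch hx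
        have h2 : x ≠ v1 := by
          rintro rfl; rw [hv1col] at hx; injection hx with h; exact hβ h.symm
        rw [hg'ne x h1 h2]; exact hx

theorem stmt_9 {V C : Type*} [Fintype V] [DecidableEq V] [DecidableEq C]
    (G : SimpleGraph V) [DecidableRel G.Adj] (hconn : G.Connected)
    (L : V → Finset C) (hL : ∀ x, G.degree x ≤ (L x).card)
    (g : V → Option C)
    (hgL : ∀ x c, g x = some c → c ∈ L x)
    (hgproper : ∀ x y, G.Adj x y → ∀ c : C, g x = some c → g y ≠ some c)
    (u : V) :
    ∃ f : V → Option C,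
      (∀ x c, f x = some c → c ∈ L x) ∧
      (∀ x y, G.Adj x y → ∀ c : C, f x = some c → f y ≠ some c) ∧
      (∀ x, x ≠ u → (f x).isSome) ∧
      (∀ α : C, (Finset.univ.filter fun x => g x = some α).card ≤
        (Finset.univ.filter fun x => f x = some α).card) := by
  exact stmt9_key G hconn L hL u _ g hgL hgproper le_rfl
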